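/- arXiv:math/9803018 — 2 statements merged into one kernel-verified Lean document; each statement's English description precedes it below -/
import Mathlib

section
/- Fix m ≥ 0 and work in the ring R = ℚ[c][x_0, x_0^{-1}, x_1, x_2, …] (polynomial ring over ℚ in an indeterminate c and countably many variables x_i, with x_0 inverted). In the formal power series ring R[[z]] set F = Σ_{i≥0} x_i x_0^{i-1} z^i and F_m = Σ_{i=0}^{m} x_i x_0^{i-1} z^i (both have constant term 1), and for a power series u with constant term 1 define u^c := Σ_{n≥0} (c choose n)·(u − 1)^n, where (c choose n) = c(c−1)⋯(c−n+1)/n!. Then for every k ≥ 1 the coefficient of z^{m+k} in F^c − F_m^c equals x_0^m · P^{(c)}_{mk}(x_0, …, x_{m+k}). (This identifies the generating-function definition of the polynomials P^{(c)}_{mk} with their explicit partition-sum expansion.) -/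
open scoped Classical

noncomputable section

/-- The field `K = ℚ(c, x₀, x₁, x₂, …)`: fraction field of the polynomial ring over `ℚ`
in the indeterminate `c` (variable `none`) and the variables `xᵢ` (variables `some i`).
The ring `R = ℚ[c][x₀, x₀⁻¹, x₁, …]` of the statement embeds in it. -/
abbrev K : Type := FractionRing (MvPolynomial (Option ℕ) ℚ)

/-- The indeterminate `c`. -/
def cK : K := algebraMap (MvPolynomial (Option ℕ) ℚ) K (MvPolynomial.X none)

/-- The variables `xᵢ`. -/
def xK (i : ℕ) : K := algebraMap (MvPolynomial (Option ℕ) ℚ) K (MvPolynomial.X (some i))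

/-- Generalized binomial coefficient `(c choose n) = c(c−1)⋯(c−n+1)/n!`. -/
def gbinom (c : K) (n : ℕ) : K := (∏ i ∈ Finset.range n, (c - i)) / (n.factorial : K)

/-- For a power series `u` with constant term `1`, the power series
`u^c := Σ_{n≥0} (c choose n)·(u − 1)^n`; the coefficient of `z^j` only receives
contributions from `n ≤ j` since `u − 1` has zero constant term. -/
def fpow (c : K) (u : PowerSeries K) : PowerSeries K :=
  PowerSeries.mk fun j =>
    ∑ n ∈ Finset.range (j + 1), gbinom c n * PowerSeries.coeff j ((u - 1) ^ n)

/-- `F = Σ_{i≥0} xᵢ x₀^{i−1} zⁱ` (with `x₀^{−1}` interpreted in the field `K`). -/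
def Fser : PowerSeries K := PowerSeries.mk fun i => xK i * xK 0 ^ ((i : ℤ) - 1)

/-- `F_m = Σ_{i=0}^{m} xᵢ x₀^{i−1} zⁱ`. -/
def Fmser (m : ℕ) : PowerSeries K :=
  PowerSeries.mk fun i => if i ≤ m then xK i * xK 0 ^ ((i : ℤ) - 1) else 0

/-- The generalized multinomial coefficient `(c choose p₁,…,p_{m+k})` attached to a
partition `π` of `n`: numerator `c(c−1)⋯(c−ℓ(π)+1)`, denominator `∏ pᵢ!`. -/
def partMultCoeff (c : K) {n : ℕ} (π : Nat.Partition n) : K :=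
  (∏ j ∈ Finset.range (Multiset.card π.parts), (c - j)) /
    ∏ i ∈ Finset.Icc 1 n, ((π.parts.count i).factorial : K)

/-- The value of the partition-sum expansion of `P^{(c)}_{mk}` at the variables
`x₀, …, x_{m+k}` of `K`:
`Σ_π (c choose p₁,…,p_{m+k}) x₀^{p₀} x₁^{p₁} ⋯ x_{m+k}^{p_{m+k}}`,
summed over partitions `π = (1^{p₁} 2^{p₂} ⋯)` of `m+k` with largest part `> m`,
where `p₀ = k − ℓ(π)`. -/
def Pval (c : K) (m k : ℕ) : K :=
  ∑ π ∈ Finset.univ.filter (fun π : Nat.Partition (m + k) => ∃ a ∈ π.parts, m < a),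
    partMultCoeff c π * xK 0 ^ (k - Multiset.card π.parts) *
      ∏ i ∈ Finset.Icc 1 (m + k), xK i ^ (π.parts.count i)


section Aux
open PowerSeries Finset

lemma xK0_ne : xK 0 ≠ 0 := by
  intro h
  exact MvPolynomial.X_ne_zero (R := ℚ) (some 0)
    (IsFractionRing.injective (MvPolynomial (Option ℕ) ℚ) K (h.trans (map_zero _).symm))

lemma mono_mul (a b : ℕ) (x y : K) :
    PowerSeries.monomial a x * PowerSeries.monomial b y
      = PowerSeries.monomial (a + b) (x * y) := by
  have := MvPowerSeries.monomial_mul_monomial (Finsupp.single () a) (Finsupp.single () b) x y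
  rw [← Finsupp.single_add] at this
  exact this

/-- The common coefficient function. -/
def vK (i : ℕ) : K := xK i * xK 0 ^ ((i : ℤ) - 1)

/-- Finite truncation series. -/
def Tser (s : Finset ℕ) : PowerSeries K := ∑ i ∈ s, PowerSeries.monomial i (vK i)

lemma coeff_Tser (s : Finset ℕ) (i : ℕ) :
    PowerSeries.coeff i (Tser s) = if i ∈ s then vK i else 0 := by
  rw [Tser, map_sum]
  simp_rw [PowerSeries.coeff_monomial]
  exact Finset.sum_ite_eq s i vK

lemma coeff_mul_congr {A A' B B' : PowerSeries K} {N : ℕ}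
    (hA : ∀ i ≤ N, PowerSeries.coeff i A = PowerSeries.coeff i A')
    (hB : ∀ i ≤ N, PowerSeries.coeff i B = PowerSeries.coeff i B') :
    ∀ i ≤ N, PowerSeries.coeff i (A * B) = PowerSeries.coeff i (A' * B') := by
  intro i hi
  rw [PowerSeries.coeff_mul, PowerSeries.coeff_mul]
  refine Finset.sum_congr rfl fun p hp => ?_
  rw [Finset.HasAntidiagonal.mem_antidiagonal] at hp
  rw [hA p.1 (by omega), hB p.2 (by omega)]

lemma coeff_pow_congr {A A' : PowerSeries K} {N : ℕ}
    (hA : ∀ i ≤ N, PowerSeries.coeff i A = PowerSeries.coeff i A') (n : ℕ) :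
    ∀ i ≤ N, PowerSeries.coeff i (A ^ n) = PowerSeries.coeff i (A' ^ n) := by
  induction n with
  | zero => intro i hi; simp
  | succ n ih =>
    intro i hi
    rw [pow_succ, pow_succ]
    exact coeff_mul_congr ih hA i hi

lemma coeff_Fser_sub_one (N i : ℕ) (hi : i ≤ N) :
    PowerSeries.coeff i (Fser - 1) = PowerSeries.coeff i (Tser (Finset.Icc 1 N)) := by
  rw [map_sub, coeff_Tser, Fser, PowerSeries.coeff_mk, PowerSeries.coeff_one]
  rcases Nat.eq_zero_or_pos i with h0 | hpos
  · subst h0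
    simp [zpow_neg, mul_inv_cancel₀ xK0_ne]
  · have h1 : i ≠ 0 := by omega
    have h2 : i ∈ Finset.Icc 1 N := Finset.mem_Icc.2 ⟨hpos, hi⟩
    rw [if_neg h1, if_pos h2, sub_zero]
    rfl

lemma coeff_Fmser_sub_one (m N i : ℕ) (hi : i ≤ N) :
    PowerSeries.coeff i (Fmser m - 1) = PowerSeries.coeff i (Tser (Finset.Icc 1 m)) := by
  rw [map_sub, coeff_Tser, Fmser, PowerSeries.coeff_mk, PowerSeries.coeff_one]
  rcases Nat.eq_zero_or_pos i with h0 | hpos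
  · subst h0
    simp [zpow_neg, mul_inv_cancel₀ xK0_ne]
  · have h1 : i ≠ 0 := by omega
    rw [if_neg h1, sub_zero]
    by_cases h2 : i ≤ m
    · rw [if_pos h2, if_pos (Finset.mem_Icc.2 ⟨hpos, h2⟩)]
      rfl
    · rw [if_neg h2, if_neg (by simp [Finset.mem_Icc]; omega)]

lemma prod_map_monomial (s : Multiset ℕ) :
    (s.map fun i => PowerSeries.monomial i (vK i)).prod
      = PowerSeries.monomial s.sum ((s.map vK).prod) := by
  induction s using Multiset.induction with
  | empty => simp
  | cons a s ih =>
    rw [Multiset.map_cons, Multiset.prod_cons, ih, Multiset.map_cons, Multiset.prod_cons,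
      Multiset.sum_cons, mono_mul]

lemma multiset_card_le_sum (s : Multiset ℕ) (h : ∀ a ∈ s, 1 ≤ a) :
    Multiset.card s ≤ s.sum := by
  induction s using Multiset.induction with
  | empty => simp
  | cons a s ih =>
    rw [Multiset.card_cons, Multiset.sum_cons]
    have := h a (Multiset.mem_cons_self a s)
    have := ih (fun b hb => h b (Multiset.mem_cons_of_mem hb))
    omega

/-- The per-partition term. -/
def wPart {N : ℕ} (π : Nat.Partition N) : K :=
  gbinom cK (Multiset.card π.parts) * (π.parts.countPerms : K) * (π.parts.map vK).prod

/-- Total map from sigma-type data to partitions. -/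
def toPart (N : ℕ) (p : Σ n : ℕ, Sym ℕ n) : Nat.Partition N :=
  if h : (∀ a ∈ p.2.val, 0 < a) ∧ p.2.val.sum = N then
    ⟨p.2.val, fun hi => h.1 _ hi, h.2⟩
  else
    ⟨Multiset.replicate N 1, fun hi => by
      rw [Multiset.eq_of_mem_replicate hi]; exact Nat.one_pos, by
      rw [Multiset.sum_replicate, smul_eq_mul, mul_one]⟩

def jmap (N : ℕ) (π : Nat.Partition N) : Σ n : ℕ, Sym ℕ n :=
  ⟨Multiset.card π.parts, ⟨π.parts, rfl⟩⟩

lemma toPart_parts (N : ℕ) (p : Σ n : ℕ, Sym ℕ n)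
    (h : (∀ a ∈ p.2.val, 0 < a) ∧ p.2.val.sum = N) : (toPart N p).parts = p.2.val := by
  rw [toPart, dif_pos h]

lemma jmap_eq (N : ℕ) (π : Nat.Partition N) (p : Σ n : ℕ, Sym ℕ n)
    (h : π.parts = p.2.val) : jmap N π = p := by
  obtain ⟨n, σ⟩ := p
  obtain ⟨ms, hms⟩ := σ
  subst hms
  replace h : π.parts = ms := h
  subst h
  rfl

lemma coeff_fpow_eq_sum_partitions (N : ℕ) (s : Finset ℕ) (hs : s ⊆ Finset.Icc 1 N)
    (U : PowerSeries K)
    (hU : ∀ i ≤ N, PowerSeries.coeff i (U - 1) = PowerSeries.coeff i (Tser s)) :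
    PowerSeries.coeff N (fpow cK U) =
      ∑ π ∈ Finset.univ.filter (fun π : Nat.Partition N => ∀ a ∈ π.parts, a ∈ s), wPart π := by
  classical
  rw [fpow, PowerSeries.coeff_mk]
  have h1 : ∀ n, PowerSeries.coeff N ((U - 1) ^ n)
      = PowerSeries.coeff N ((Tser s) ^ n) :=
    fun n => coeff_pow_congr hU n N le_rfl
  have h2 : ∀ n, PowerSeries.coeff N ((Tser s) ^ n)
      = ∑ σ ∈ s.sym n, if N = σ.val.sum
          then (σ.val.countPerms : K) * (σ.val.map vK).prod else 0 := by
    intro n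
    rw [Tser, Finset.sum_pow, map_sum]
    refine Finset.sum_congr rfl fun σ _ => ?_
    rw [prod_map_monomial, ← map_natCast (PowerSeries.C (R := K)) σ.val.countPerms,
      PowerSeries.coeff_C_mul, PowerSeries.coeff_monomial, mul_ite, mul_zero]
  simp_rw [h1, h2, Finset.mul_sum, mul_ite, mul_zero, ← Finset.sum_filter]
  rw [Finset.sum_sigma']
  refine Finset.sum_nbij' (toPart N) (jmap N) ?_ ?_ ?_ ?_ ?_
  · -- maps into the filtered partitions
    rintro ⟨n, σ⟩ hp
    rw [Finset.mem_sigma, Finset.mem_filter] at hp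
    obtain ⟨-, hσs, hσsum⟩ := hp
    rw [Finset.mem_sym_iff] at hσs
    have hcond : (∀ a ∈ σ.val, 0 < a) ∧ σ.val.sum = N :=
      ⟨fun a ha => (Finset.mem_Icc.1 (hs (hσs a ha))).1, hσsum.symm⟩
    rw [Finset.mem_filter]
    refine ⟨Finset.mem_univ _, ?_⟩
    intro a ha
    rw [toPart, dif_pos hcond] at ha
    exact hσs a ha
  · -- jmap maps back
    intro π hπ
    rw [Finset.mem_filter] at hπ
    rw [Finset.mem_sigma, Finset.mem_filter, Finset.mem_sym_iff]
    refine ⟨?_, ⟨?_, ?_⟩⟩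
    · rw [Finset.mem_range, Nat.lt_succ_iff]
      exact le_of_le_of_eq (multiset_card_le_sum _ (fun a ha => π.parts_pos ha)) π.parts_sum
    · exact fun a ha => hπ.2 a ha
    · exact π.parts_sum.symm
  · -- left inverse
    rintro ⟨n, σ⟩ hp
    rw [Finset.mem_sigma, Finset.mem_filter] at hp
    obtain ⟨-, hσs, hσsum⟩ := hp
    rw [Finset.mem_sym_iff] at hσs
    have hcond : (∀ a ∈ σ.val, 0 < a) ∧ σ.val.sum = N :=
      ⟨fun a ha => (Finset.mem_Icc.1 (hs (hσs a ha))).1, hσsum.symm⟩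
    exact jmap_eq N _ _ (toPart_parts N _ hcond)
  · -- right inverse
    intro π hπ
    have hcond : (∀ a ∈ (jmap N π).2.val, 0 < a) ∧ (jmap N π).2.val.sum = N :=
      ⟨fun a ha => π.parts_pos ha, π.parts_sum⟩
    refine Nat.Partition.ext ?_
    rw [toPart, dif_pos hcond]
    rfl
  · -- values agree
    rintro ⟨n, σ⟩ hp
    rw [Finset.mem_sigma, Finset.mem_filter] at hp
    obtain ⟨-, hσs, hσsum⟩ := hp
    rw [Finset.mem_sym_iff] at hσs
    have hcond : (∀ a ∈ σ.val, 0 < a) ∧ σ.val.sum = N :=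
      ⟨fun a ha => (Finset.mem_Icc.1 (hs (hσs a ha))).1, hσsum.symm⟩
    have hparts : (toPart N ⟨n, σ⟩).parts = σ.val := by rw [toPart, dif_pos hcond]
    rw [wPart, hparts, σ.prop, mul_assoc]

end Aux


lemma mem_le_sum (t : Multiset ℕ) (a : ℕ) (ha : a ∈ t) : a ≤ t.sum := by
  rw [← Multiset.cons_erase ha, Multiset.sum_cons]
  exact Nat.le_add_right _ _

lemma card_le_of_big_part {N m k : ℕ} (hN : N = m + k) (π : Nat.Partition N) (a : ℕ)
    (ha : a ∈ π.parts) (hma : m < a) : Multiset.card π.parts ≤ k := by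
  have hcons := Multiset.cons_erase ha
  have hsum : a + (π.parts.erase a).sum = N := by
    rw [← Multiset.sum_cons, hcons, π.parts_sum]
  have hcard : Multiset.card π.parts = Multiset.card (π.parts.erase a) + 1 := by
    conv_lhs => rw [← hcons]
    rw [Multiset.card_cons]
  have hle : Multiset.card (π.parts.erase a) ≤ (π.parts.erase a).sum :=
    multiset_card_le_sum _ (fun b hb => π.parts_pos (Multiset.mem_of_mem_erase hb))
  omega

lemma prod_map_x0 (t : Multiset ℕ) :
    (t.map (fun i : ℕ => xK 0 ^ ((i : ℤ) - 1))).prod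
      = xK 0 ^ ((t.sum : ℤ) - Multiset.card t) := by
  induction t using Multiset.induction with
  | empty => simp
  | cons a s ih =>
    rw [Multiset.map_cons, Multiset.prod_cons, ih, ← zpow_add₀ xK0_ne,
      Multiset.sum_cons, Multiset.card_cons]
    congr 1
    push_cast
    ring

lemma prod_map_xK (N : ℕ) (t : Multiset ℕ) (hN : ∀ b ∈ t, b ∈ Finset.Icc 1 N) :
    (t.map xK).prod = ∏ i ∈ Finset.Icc 1 N, xK i ^ (t.count i) := by
  rw [Finset.prod_multiset_map_count]
  apply Finset.prod_subset
  · intro i hi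
    rw [Multiset.mem_toFinset] at hi
    exact hN i hi
  · intro i _ hi
    rw [Multiset.mem_toFinset] at hi
    rw [Multiset.count_eq_zero_of_notMem hi, pow_zero]

lemma factorial_prod_multinomial {N : ℕ} (π : Nat.Partition N) :
    (∏ i ∈ Finset.Icc 1 N, (π.parts.count i).factorial) * π.parts.countPerms
      = (Multiset.card π.parts).factorial := by
  have h1 : ∏ i ∈ Finset.Icc 1 N, (π.parts.count i).factorial
      = ∏ i ∈ π.parts.toFinset, (π.parts.count i).factorial := by
    symm
    apply Finset.prod_subset
    · intro i hi
      rw [Multiset.mem_toFinset] at hi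
      exact Finset.mem_Icc.2 ⟨π.parts_pos hi,
        le_of_le_of_eq (mem_le_sum _ _ hi) π.parts_sum⟩
    · intro i _ hi
      rw [Multiset.mem_toFinset] at hi
      rw [Multiset.count_eq_zero_of_notMem hi]
      rfl
  have h2 : π.parts.countPerms = Nat.multinomial π.parts.toFinset π.parts.count := by
    rw [Multiset.countPerms, Finsupp.multinomial_eq, Multiset.toFinsupp_support]
    exact Nat.multinomial_congr (fun a _ => Multiset.toFinsupp_apply _ _)
  rw [h1, h2, Nat.multinomial_spec, Multiset.toFinset_sum_count_eq]

lemma gbinom_mul_multinomial {N : ℕ} (π : Nat.Partition N) :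
    gbinom cK (Multiset.card π.parts) * (π.parts.countPerms : K) = partMultCoeff cK π := by
  have hD : (∏ i ∈ Finset.Icc 1 N, ((π.parts.count i).factorial : K)) ≠ 0 := by
    apply Finset.prod_ne_zero_iff.2
    intro i _
    exact_mod_cast Nat.cast_ne_zero.2 (Nat.factorial_ne_zero _)
  have hF : ((Multiset.card π.parts).factorial : K) ≠ 0 :=
    Nat.cast_ne_zero.2 (Nat.factorial_ne_zero _)
  rw [gbinom, partMultCoeff, div_mul_eq_mul_div, div_eq_div_iff hF hD]
  have := congrArg (fun n : ℕ => (n : K)) (factorial_prod_multinomial π)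
  push_cast at this
  rw [mul_assoc, mul_comm ((π.parts.countPerms : K)) _, this]

/-- For every `m ≥ 0` and `k ≥ 1`, the coefficient of `z^{m+k}` in
`F^c − F_m^c` equals `x₀^m · P^{(c)}_{mk}(x₀, …, x_{m+k})`. -/
theorem coeff_fpow_sub_fpow_eq (m k : ℕ) (hk : 1 ≤ k) :
    PowerSeries.coeff (m + k) (fpow cK Fser - fpow cK (Fmser m)) =
      xK 0 ^ m * Pval cK m k := by
  classical
  set N := m + k with hN
  rw [map_sub]
  rw [coeff_fpow_eq_sum_partitions N (Finset.Icc 1 N) (le_refl _) Fser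
    (fun i hi => coeff_Fser_sub_one N i hi)]
  rw [coeff_fpow_eq_sum_partitions N (Finset.Icc 1 m)
    (Finset.Icc_subset_Icc_right (by omega)) (Fmser m)
    (fun i hi => coeff_Fmser_sub_one m N i hi)]
  have hPN : Finset.univ.filter
      (fun π : Nat.Partition N => ∀ a ∈ π.parts, a ∈ Finset.Icc 1 N) = Finset.univ := by
    apply Finset.filter_true_of_mem
    intro π _ a ha
    exact Finset.mem_Icc.2 ⟨π.parts_pos ha, le_of_le_of_eq (mem_le_sum _ _ ha) π.parts_sum⟩
  rw [hPN]
  rw [← Finset.sum_filter_add_sum_filter_not Finset.univ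
    (fun π : Nat.Partition N => ∀ a ∈ π.parts, a ∈ Finset.Icc 1 m) wPart,
    add_sub_cancel_left]
  have hfilter : (Finset.univ.filter
        (fun π : Nat.Partition N => ¬ ∀ a ∈ π.parts, a ∈ Finset.Icc 1 m))
      = Finset.univ.filter (fun π : Nat.Partition N => ∃ a ∈ π.parts, m < a) := by
    apply Finset.filter_congr
    intro π _
    constructor
    · intro h
      push_neg at h
      obtain ⟨a, ha, hna⟩ := h
      refine ⟨a, ha, ?_⟩
      have h1 := π.parts_pos ha
      rw [Finset.mem_Icc] at hna
      omega
    · rintro ⟨a, ha, hma⟩ h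
      have := (Finset.mem_Icc.1 (h a ha)).2
      omega
  rw [hfilter, Pval, Finset.mul_sum]
  apply Finset.sum_congr rfl
  intro π hπ
  rw [Finset.mem_filter] at hπ
  obtain ⟨-, a, ha, hma⟩ := hπ
  have hlk : Multiset.card π.parts ≤ k := card_le_of_big_part hN π a ha hma
  have hparts_mem : ∀ b ∈ π.parts, b ∈ Finset.Icc 1 N := fun b hb =>
    Finset.mem_Icc.2 ⟨π.parts_pos hb, le_of_le_of_eq (mem_le_sum _ _ hb) π.parts_sum⟩
  have hB : (π.parts.map vK).prod
      = (∏ i ∈ Finset.Icc 1 N, xK i ^ (π.parts.count i))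
          * xK 0 ^ ((N : ℤ) - Multiset.card π.parts) := by
    rw [show (π.parts.map vK) = π.parts.map
      (fun i => xK i * xK 0 ^ ((i : ℤ) - 1)) from rfl]
    rw [Multiset.prod_map_mul, prod_map_x0, prod_map_xK N _ hparts_mem, π.parts_sum]
  have hexp : ((N : ℤ) - Multiset.card π.parts)
      = ((m + (k - Multiset.card π.parts) : ℕ) : ℤ) := by
    push_cast [Nat.cast_sub hlk]
    omega
  rw [wPart, gbinom_mul_multinomial, hB, hexp, zpow_natCast, pow_add]
  ring

end
end

section
/- Let p be a prime and k ∈ ℤ_p with p-adic digit expansion k = Σ_{i≥0} k_i p^i where 0 ≤ k_i < p for all i (the sum converging in ℤ_p). Let q_1, …, q_r be nonnegative integers with base-p expansions q_j = Σ_{i≥0} q_{ji} p^i, 0 ≤ q_{ji} < p. Then: (1) (k choose q_1,…,q_r) ≡ Π_{i≥0} (k_i choose q_{1i},…,q_{ri}) (mod p·ℤ_p), where the product has only finitely many factors ≠ 1 and for natural numbers a, b_1,…,b_r the multinomial coefficient (a choose b_1,…,b_r) equals a!/(b_1!⋯b_r!·(a−Σb_j)!) if a ≥ Σb_j and 0 otherwise;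 (2) consequently, (k choose q_1,…,q_r) ≢ 0 (mod p·ℤ_p) if and only if k_i ≥ q_{1i} + ⋯ + q_{ri} for every i; and (3) in that case ν_p(q_j) ≥ ν_p(k) for every j with q_j ≠ 0, where ν_p denotes p-adic valuation. -/
/-- The multinomial coefficient `(a choose b₁,…,b_r) = a!/(b₁!⋯b_r!·(a−Σbⱼ)!)` for
natural numbers, equal to `0` if `a < Σbⱼ`. -/
def natMultinomial {r : ℕ} (a : ℕ) (b : Fin r → ℕ) : ℕ :=
  if (∑ j, b j) ≤ a then
    a.factorial / ((∏ j, (b j).factorial) * (a - ∑ j, b j).factorial)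
  else 0

open Finset

lemma natMultinomial_of_lt {r : ℕ} {a : ℕ} {b : Fin r → ℕ} (h : ¬ (∑ j, b j) ≤ a) :
    natMultinomial a b = 0 := if_neg h

lemma natMultinomial_eq {r : ℕ} {a : ℕ} {b : Fin r → ℕ} (h : (∑ j, b j) ≤ a) :
    natMultinomial a b = a.choose (∑ j, b j) * Nat.multinomial Finset.univ b := by
  rw [natMultinomial, if_pos h]
  refine Nat.div_eq_of_eq_mul_left (by positivity) ?_
  calc a.factorial = a.choose (∑ j, b j) * (∑ j, b j).factorial * (a - ∑ j, b j).factorial :=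
        (Nat.choose_mul_factorial_mul_factorial h).symm
    _ = a.choose (∑ j, b j) * ((∏ j, (b j).factorial) * Nat.multinomial Finset.univ b)
          * (a - ∑ j, b j).factorial := by rw [Nat.multinomial_spec]
    _ = _ := by ring

lemma natMultinomial_mul_fact {r : ℕ} {a : ℕ} {b : Fin r → ℕ} (h : (∑ j, b j) ≤ a) :
    natMultinomial a b * ((∏ j, (b j).factorial) * (a - ∑ j, b j).factorial) = a.factorial := by
  rw [natMultinomial_eq h]
  calc a.choose (∑ j, b j) * Nat.multinomial Finset.univ b
        * ((∏ j, (b j).factorial) * (a - ∑ j, b j).factorial)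
      = a.choose (∑ j, b j) * ((∏ j, (b j).factorial) * Nat.multinomial Finset.univ b)
          * (a - ∑ j, b j).factorial := by ring
    _ = a.choose (∑ j, b j) * (∑ j, b j).factorial * (a - ∑ j, b j).factorial := by
          rw [Nat.multinomial_spec]
    _ = a.factorial := Nat.choose_mul_factorial_mul_factorial h

lemma natMultinomial_mul_prod_factorial {r : ℕ} (a : ℕ) (b : Fin r → ℕ) :
    natMultinomial a b * ∏ j, (b j).factorial = a.descFactorial (∑ j, b j) := by
  by_cases h : (∑ j, b j) ≤ a
  · rw [natMultinomial_eq h, Nat.descFactorial_eq_factorial_mul_choose]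
    calc a.choose (∑ j, b j) * Nat.multinomial Finset.univ b * ∏ j, (b j).factorial
        = ((∏ j, (b j).factorial) * Nat.multinomial Finset.univ b) * a.choose (∑ j, b j) := by ring
      _ = _ := by rw [Nat.multinomial_spec]
  · rw [natMultinomial_of_lt h, Nat.zero_mul,
      eq_comm, Nat.descFactorial_eq_zero_iff_lt]
    omega

lemma descFactorial_add (a m n : ℕ) :
    a.descFactorial (m + n) = a.descFactorial m * (a - m).descFactorial n := by
  simp only [Nat.descFactorial_eq_prod_range, Finset.prod_range_add]
  congr 1
  refine Finset.prod_congr rfl fun i _ => ?_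
  omega

lemma natMultinomial_cons {r : ℕ} (a b0 : ℕ) (b : Fin r → ℕ) :
    natMultinomial a (Fin.cons b0 b) = a.choose b0 * natMultinomial (a - b0) b := by
  have hpos : 0 < b0.factorial * ∏ j, (b j).factorial := by positivity
  refine Nat.eq_of_mul_eq_mul_right hpos ?_
  have h1 : natMultinomial a (Fin.cons b0 b) * (b0.factorial * ∏ j, (b j).factorial)
      = a.descFactorial (b0 + ∑ j, b j) := by
    have := natMultinomial_mul_prod_factorial a (Fin.cons b0 b)
    simpa [Fin.prod_univ_succ, Fin.sum_univ_succ] using this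
  rw [h1, descFactorial_add]
  have h2 := natMultinomial_mul_prod_factorial (a - b0) b
  calc a.descFactorial b0 * (a - b0).descFactorial (∑ j, b j)
      = (b0.factorial * a.choose b0) * (natMultinomial (a - b0) b * ∏ j, (b j).factorial) := by
        rw [← Nat.descFactorial_eq_factorial_mul_choose, h2]
    _ = _ := by ring

lemma natMultinomial_fin_zero (a : ℕ) (b : Fin 0 → ℕ) : natMultinomial a b = 1 := by
  simp [natMultinomial, Nat.div_self (Nat.factorial_pos a)]

lemma cons_comp {r : ℕ} (b0 : ℕ) (b : Fin r → ℕ) (g : ℕ → ℕ) :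
    (fun j : Fin (r+1) => g ((Fin.cons b0 b : Fin (r+1) → ℕ) j)) = Fin.cons (g b0) (fun j => g (b j)) := by
  funext j
  refine Fin.cases ?_ ?_ j <;> simp

lemma sub_div_mod_of_le {p a b : ℕ} (hp : 0 < p) (hb : b ≤ a) (h0 : b % p ≤ a % p) :
    (a - b) % p = a % p - b % p ∧ (a - b) / p = a / p - b / p := by
  have h1 : b / p ≤ a / p := Nat.div_le_div_right hb
  have hab : a - b = p * (a / p - b / p) + (a % p - b % p) := by
    have ha := Nat.div_add_mod a p
    have hbb := Nat.div_add_mod b p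
    have hd1 : a / p = b / p + (a / p - b / p) := by omega
    have key : p * (a / p) = p * (b / p) + p * (a / p - b / p) := by
      rw [← Nat.mul_add, Nat.add_sub_cancel' h1]
    omega
  have hlt : a % p - b % p < p := lt_of_le_of_lt (Nat.sub_le _ _) (Nat.mod_lt a hp)
  constructor
  · rw [hab, Nat.mul_add_mod, Nat.mod_eq_of_lt hlt]
  · rw [hab, Nat.mul_add_div hp, Nat.div_eq_of_lt hlt, Nat.add_zero]

lemma natMultinomial_one_step (p : ℕ) [hp : Fact p.Prime] :
    ∀ {r : ℕ} (a : ℕ) (b : Fin r → ℕ),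
    (natMultinomial a b : ZMod p) =
      (natMultinomial (a % p) (fun j => b j % p) : ZMod p) *
      (natMultinomial (a / p) (fun j => b j / p) : ZMod p) := by
  intro r
  induction r with
  | zero => intro a b; simp [natMultinomial_fin_zero]
  | succ r ih =>
    intro a b
    obtain ⟨b0, t, rfl⟩ : ∃ b0 t, b = Fin.cons b0 t := ⟨b 0, Fin.tail b, (Fin.cons_self_tail b).symm⟩
    have hchoose : ((a.choose b0 : ℕ) : ZMod p)
        = ((a % p).choose (b0 % p) * ((a / p).choose (b0 / p)) : ℕ) := by
      exact_mod_cast (ZMod.natCast_eq_natCast_iff _ _ _).mpr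
        Choose.choose_modEq_choose_mod_mul_choose_div_nat
    rw [cons_comp b0 t (fun x => x % p), cons_comp b0 t (fun x => x / p)]
    rw [natMultinomial_cons, natMultinomial_cons, natMultinomial_cons]
    by_cases h0 : b0 % p ≤ a % p
    · by_cases hba : b0 ≤ a
      · obtain ⟨hm, hd⟩ := sub_div_mod_of_le hp.out.pos hba h0
        push_cast
        rw [hchoose, ih (a - b0) t, hm, hd]
        push_cast
        ring
      · -- b0 > a : LHS choose = 0, RHS second choose = 0
        have hdiv : a / p < b0 / p := by
          by_contra hc
          push_neg at hc
          have ha := Nat.div_add_mod a p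
          have hbb := Nat.div_add_mod b0 p
          have : p * (b0 / p) ≤ p * (a / p) := Nat.mul_le_mul_left p hc
          omega
        rw [Nat.choose_eq_zero_of_lt (show a < b0 by omega), Nat.choose_eq_zero_of_lt hdiv]
        push_cast
        ring
    · -- b0 % p > a % p : both sides 0
      have hc0 : (a % p).choose (b0 % p) = 0 := Nat.choose_eq_zero_of_lt (by omega)
      have hch0 : ((a.choose b0 : ℕ) : ZMod p) = 0 := by
        rw [hchoose, hc0]
        simp
      rw [hc0]
      push_cast
      rw [hch0]
      ring

lemma natMultinomial_zero_fun {r : ℕ} (a : ℕ) :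
    natMultinomial a (fun _ : Fin r => (0 : ℕ)) = 1 := by
  simp [natMultinomial, Nat.div_self (Nat.factorial_pos a)]

lemma natMultinomial_lucas (p : ℕ) [hp : Fact p.Prime] :
    ∀ (N : ℕ) {r : ℕ} (a : ℕ) (b : Fin r → ℕ), (∀ j, b j < p ^ N) →
    (natMultinomial a b : ZMod p) =
      ∏ i ∈ range N, (natMultinomial (a / p ^ i % p) (fun j => b j / p ^ i % p) : ZMod p) := by
  intro N
  induction N with
  | zero =>
    intro r a b hb
    have : b = fun _ => 0 := funext fun j => by
      have : b j < 1 := by simpa using hb j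
      omega
    subst this
    simp [natMultinomial_zero_fun]
  | succ N ih =>
    intro r a b hb
    rw [natMultinomial_one_step p a b]
    have hb' : ∀ j, b j / p < p ^ N := fun j => by
      rw [Nat.div_lt_iff_lt_mul hp.out.pos]
      calc b j < p ^ (N + 1) := hb j
        _ = p ^ N * p := by rw [pow_succ]
    rw [ih (a / p) (fun j => b j / p) hb']
    rw [Finset.prod_range_succ', mul_comm]
    congr 1
    · refine Finset.prod_congr rfl fun i _ => ?_
      have h1 : a / p / p ^ i = a / p ^ (i + 1) := by
        rw [Nat.div_div_eq_div_mul, ← pow_succ']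
      have h2 : ∀ j, b j / p / p ^ i = b j / p ^ (i + 1) := fun j => by
        rw [Nat.div_div_eq_div_mul, ← pow_succ']
      simp only [h1, h2]
    · simp

lemma natMultinomial_dvd_factorial {r : ℕ} {a : ℕ} {b : Fin r → ℕ} (h : (∑ j, b j) ≤ a) :
    natMultinomial a b ∣ a.factorial :=
  ⟨_, (natMultinomial_mul_fact h).symm⟩

lemma not_dvd_natMultinomial (p : ℕ) (hp : p.Prime) {r : ℕ} {a : ℕ} {b : Fin r → ℕ}
    (ha : a < p) (h : (∑ j, b j) ≤ a) : ¬ p ∣ natMultinomial a b := by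
  intro hdvd
  have : p ∣ a.factorial := hdvd.trans (natMultinomial_dvd_factorial h)
  rw [hp.dvd_factorial] at this
  omega

lemma digit_sum_lt {p : ℕ} (hp : 0 < p) (kd : ℕ → ℕ) (hkd : ∀ i, kd i < p) (n : ℕ) :
    (∑ i ∈ range n, kd i * p ^ i) < p ^ n := by
  induction n with
  | zero => simp
  | succ n ih =>
    obtain ⟨q, rfl⟩ : ∃ q, p = q + 1 := ⟨p - 1, by omega⟩
    rw [Finset.sum_range_succ]
    have h1 : kd n * (q + 1) ^ n ≤ q * (q + 1) ^ n :=
      Nat.mul_le_mul_right _ (by have := hkd n; omega)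
    have hX : 0 < (q + 1) ^ n := pow_pos (by omega) n
    have h2 : (q + 1) ^ (n + 1) = q * (q + 1) ^ n + (q + 1) ^ n := by rw [pow_succ]; ring
    omega

lemma digit_div_pow_mod {p : ℕ} (hp : 0 < p) (kd : ℕ → ℕ) (hkd : ∀ i, kd i < p) {n M : ℕ}
    (h : n < M) : (∑ i ∈ range M, kd i * p ^ i) / p ^ n % p = kd n := by
  obtain ⟨m, rfl⟩ : ∃ m, M = n + (m + 1) := ⟨M - n - 1, by omega⟩
  rw [Finset.sum_range_add]
  have hshift : ∀ i, kd (n + i) * p ^ (n + i) = p ^ n * (kd (n + i) * p ^ i) := fun i => by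
    rw [pow_add]; ring
  simp only [hshift, ← Finset.mul_sum]
  rw [Nat.add_mul_div_left _ _ (Nat.pow_pos (n := n) hp),
    Nat.div_eq_of_lt (digit_sum_lt hp kd hkd n), Nat.zero_add]
  rw [Finset.sum_range_succ']
  simp only [pow_succ']
  have : ∀ i, kd (n + (i + 1)) * (p * p ^ i) = p * (kd (n + (i+1)) * p ^ i) := fun i => by ring
  simp only [this, ← Finset.mul_sum, pow_zero, Nat.mul_one]
  rw [Nat.mul_add_mod, Nat.add_zero]
  exact Nat.mod_eq_of_lt (hkd n)

section PadicLemmas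

variable {p : ℕ} [hp : Fact p.Prime]

lemma padic_pow_dvd_natCast {m n : ℕ} : (p : ℤ_[p]) ^ m ∣ (n : ℤ_[p]) ↔ p ^ m ∣ n := by
  constructor
  · intro h
    have h2 : (p : ℤ_[p]) ^ m ∣ ((n : ℤ) : ℤ_[p]) := by exact_mod_cast h
    rw [PadicInt.pow_p_dvd_int_iff] at h2
    exact_mod_cast h2
  · intro h
    have h2 : ((p : ℤ) ^ m : ℤ) ∣ (n : ℤ) := by exact_mod_cast h
    have := (PadicInt.pow_p_dvd_int_iff m (n : ℤ)).mpr (by exact_mod_cast h2)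
    exact_mod_cast this

lemma padic_dvd_natCast {n : ℕ} : (p : ℤ_[p]) ∣ (n : ℤ_[p]) ↔ p ∣ n := by
  have := padic_pow_dvd_natCast (p := p) (m := 1) (n := n)
  simpa using this

lemma padic_dvd_sub_of_zmod_eq {x y : ℕ} (h : (x : ZMod p) = y) :
    (p : ℤ_[p]) ∣ (x : ℤ_[p]) - (y : ℤ_[p]) := by
  have h2 : (p : ℤ) ∣ (y : ℤ) - (x : ℤ) :=
    Nat.ModEq.dvd ((ZMod.natCast_eq_natCast_iff _ _ _).mp h)
  obtain ⟨c, hc⟩ := h2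
  refine dvd_sub_comm.mp ⟨(c : ℤ_[p]), ?_⟩
  have : ((y : ℤ) - (x : ℤ) : ℤ) = (p : ℤ) * c := hc
  calc (y : ℤ_[p]) - (x : ℤ_[p]) = (((y : ℤ) - (x : ℤ) : ℤ) : ℤ_[p]) := by push_cast; ring
    _ = (((p : ℤ) * c : ℤ) : ℤ_[p]) := by rw [this]
    _ = (p : ℤ_[p]) * (c : ℤ_[p]) := by push_cast; ring

lemma dvd_prod_sub {R : Type*} [CommRing R] (d : R) (f g : ℕ → R) (n : ℕ)
    (h : ∀ i, d ∣ f i - g i) :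
    d ∣ (∏ i ∈ range n, f i) - (∏ i ∈ range n, g i) := by
  induction n with
  | zero => simp
  | succ n ih =>
    rw [Finset.prod_range_succ, Finset.prod_range_succ]
    have heq : (∏ i ∈ range n, f i) * f n - (∏ i ∈ range n, g i) * g n
        = ((∏ i ∈ range n, f i) - ∏ i ∈ range n, g i) * f n
          + (∏ i ∈ range n, g i) * (f n - g n) := by ring
    rw [heq]
    exact dvd_add (ih.mul_right _) ((h n).mul_left _)

lemma padic_summable_digits (kd : ℕ → ℕ) :
    Summable (fun i => (kd i : ℤ_[p]) * (p : ℤ_[p]) ^ i) := by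
  have hplt : ((p : ℝ))⁻¹ < 1 := by
    apply inv_lt_one_of_one_lt₀
    exact_mod_cast hp.out.one_lt
  refine Summable.of_norm_bounded (g := fun i => ((p : ℝ)⁻¹) ^ i)
    (summable_geometric_of_lt_one (by positivity) hplt) (fun i => ?_)
  calc ‖(kd i : ℤ_[p]) * (p : ℤ_[p]) ^ i‖ = ‖(kd i : ℤ_[p])‖ * ‖(p : ℤ_[p])‖ ^ i := by
        rw [norm_mul, norm_pow]
    _ ≤ 1 * ‖(p : ℤ_[p])‖ ^ i := by
        apply mul_le_mul_of_nonneg_right (PadicInt.norm_le_one _) (by positivity)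
    _ = ((p : ℝ)⁻¹) ^ i := by rw [one_mul, PadicInt.norm_p]

lemma padic_tail_dvd (kd : ℕ → ℕ) (M : ℕ) :
    (p : ℤ_[p]) ^ M ∣ (∑' i, (kd i : ℤ_[p]) * (p : ℤ_[p]) ^ i)
      - ((∑ i ∈ range M, kd i * p ^ i : ℕ) : ℤ_[p]) := by
  set f : ℕ → ℤ_[p] := fun i => (kd i : ℤ_[p]) * (p : ℤ_[p]) ^ i with hf
  have hsum : Summable f := padic_summable_digits kd
  have hsplit : (∑ i ∈ range M, f i) + (∑' i, f (i + M)) = ∑' i, f i :=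
    Summable.sum_add_tsum_nat_add M hsum
  have hKcast : ((∑ i ∈ range M, kd i * p ^ i : ℕ) : ℤ_[p]) = ∑ i ∈ range M, f i := by
    push_cast [hf]
    rfl
  rw [hKcast, ← hsplit]
  have heq : (∑' i, f (i + M)) = ∑' i, ((kd (i + M) : ℤ_[p]) * (p : ℤ_[p]) ^ i) * (p : ℤ_[p]) ^ M := by
    refine tsum_congr fun i => ?_
    rw [hf]
    simp only [pow_add]
    ring
  rw [show (∑ i ∈ range M, f i) + (∑' i, f (i + M)) - (∑ i ∈ range M, f i)
    = ∑' i, f (i + M) by ring, heq,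
    Summable.tsum_mul_right _ (padic_summable_digits (fun i => kd (i + M)))]
  exact dvd_mul_left _ _

end PadicLemmas


/-- **Lucas' theorem for generalized p-adic multinomial coefficients.**
Let `k ∈ ℤ_p` with digit expansion `k = Σᵢ kᵢ pⁱ` (`0 ≤ kᵢ < p`), let `q₁,…,q_r` be
nonnegative integers, whose base-`p` digits are `qⱼᵢ = qⱼ/pⁱ % p`, and let `B ∈ ℤ_p` be
the generalized multinomial coefficient `(k choose q₁,…,q_r)`.  Then:
(1) for any `N` with `qⱼ < p^N` for all `j`,
`B ≡ Πᵢ₌₀^{N−1} (kᵢ choose q₁ᵢ,…,q_rᵢ) (mod p·ℤ_p)` (the omitted factors are `1`);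
(2) `B ≢ 0 (mod p·ℤ_p)` iff `kᵢ ≥ q₁ᵢ + ⋯ + q_rᵢ` for every `i`; and
(3) in that case, `ν_p(qⱼ) ≥ ν_p(k)` for every `j` with `qⱼ ≠ 0`. -/
theorem multinomial_lucas (p : ℕ) [Fact p.Prime] (k : ℤ_[p]) (kd : ℕ → ℕ)
    (hkd : ∀ i, kd i < p) (hk : k = ∑' i, (kd i : ℤ_[p]) * (p : ℤ_[p]) ^ i)
    (r : ℕ) (q : Fin r → ℕ) (B : ℤ_[p])
    (hB : (B : ℚ_[p]) * ∏ i, ((q i).factorial : ℚ_[p]) =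
      ∏ j ∈ Finset.range (∑ i, q i), ((k : ℚ_[p]) - j)) :
    (∀ N : ℕ, (∀ j, q j < p ^ N) →
      (p : ℤ_[p]) ∣
        (B - ∏ i ∈ Finset.range N,
          (natMultinomial (kd i) (fun j => q j / p ^ i % p) : ℤ_[p]))) ∧
    (¬ (p : ℤ_[p]) ∣ B ↔ ∀ i : ℕ, (∑ j, q j / p ^ i % p) ≤ kd i) ∧
    ((∀ i : ℕ, (∑ j, q j / p ^ i % p) ≤ kd i) →
      ∀ j, q j ≠ 0 → (k : ℚ_[p]).valuation ≤ (padicValNat p (q j) : ℤ)) := by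
  have hpp : p.Prime := Fact.out
  have hppos : 0 < p := hpp.pos
  set Q : ℕ := ∑ i, q i with hQdef
  set F : ℕ := ∏ i, (q i).factorial with hFdef
  have hFpos : 0 < F := Finset.prod_pos fun i _ => Nat.factorial_pos _
  set v : ℕ := F.factorization p with hvdef
  set F' : ℕ := F / p ^ v with hF'def
  have hFF : p ^ v * F' = F := Nat.ordProj_mul_ordCompl_eq_self F p
  have hpF' : ¬ p ∣ F' := Nat.not_dvd_ordCompl hpp hFpos.ne'
  -- ℤ_[p] version of hB
  have hB' : B * (F : ℤ_[p]) = ∏ j ∈ Finset.range Q, (k - (j : ℤ_[p])) := by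
    apply Subtype.coe_injective
    have hR : ((∏ j ∈ Finset.range Q, (k - (j : ℤ_[p])) : ℤ_[p]) : ℚ_[p])
        = ∏ j ∈ Finset.range Q, ((k : ℚ_[p]) - j) := by
      rw [show ((∏ j ∈ Finset.range Q, (k - (j : ℤ_[p])) : ℤ_[p]) : ℚ_[p])
          = PadicInt.Coe.ringHom (∏ j ∈ Finset.range Q, (k - (j : ℤ_[p]))) from rfl,
        map_prod]
      exact Finset.prod_congr rfl fun j _ => by push_cast; rfl
    show ((B * (F : ℤ_[p]) : ℤ_[p]) : ℚ_[p])
      = ((∏ j ∈ Finset.range Q, (k - (j : ℤ_[p])) : ℤ_[p]) : ℚ_[p])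
    rw [hR, PadicInt.coe_mul, PadicInt.coe_natCast, hFdef]
    push_cast
    exact hB
  -- the main congruence
  have main : ∀ N : ℕ, (∀ j, q j < p ^ N) →
      (p : ℤ_[p]) ∣ (B - ((∏ i ∈ Finset.range N,
        natMultinomial (kd i) (fun j => q j / p ^ i % p) : ℕ) : ℤ_[p])) := by
    intro N hN
    set M : ℕ := N + v + 1 with hMdef
    set K : ℕ := ∑ i ∈ Finset.range M, kd i * p ^ i with hKdef
    set C : ℕ := natMultinomial K q with hCdef
    have hdiffk : (p : ℤ_[p]) ^ M ∣ k - (K : ℤ_[p]) := by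
      rw [hk]; exact padic_tail_dvd kd M
    have hCK : (C : ℤ_[p]) * (F : ℤ_[p]) = ∏ j ∈ Finset.range Q, ((K : ℤ_[p]) - (j : ℤ_[p])) := by
      have h1 : C * F = K.descFactorial Q := natMultinomial_mul_prod_factorial K q
      by_cases hQK : Q ≤ K
      · rw [← Nat.cast_mul, h1, Nat.descFactorial_eq_prod_range, Nat.cast_prod]
        refine Finset.prod_congr rfl fun j hj => ?_
        rw [Nat.cast_sub (le_trans (le_of_lt (Finset.mem_range.mp hj)) hQK)]
      · rw [← Nat.cast_mul, h1, Nat.descFactorial_eq_zero_iff_lt.mpr (by omega), Nat.cast_zero,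
          eq_comm]
        apply Finset.prod_eq_zero (Finset.mem_range.mpr (show K < Q by omega))
        rw [sub_self]
    have hprod : (p : ℤ_[p]) ^ M ∣ (∏ j ∈ Finset.range Q, (k - (j : ℤ_[p])))
        - ∏ j ∈ Finset.range Q, ((K : ℤ_[p]) - (j : ℤ_[p])) := by
      refine dvd_prod_sub _ _ _ _ (fun j => ?_)
      have heq2 : (k - (j : ℤ_[p])) - ((K : ℤ_[p]) - (j : ℤ_[p])) = k - (K : ℤ_[p]) := by ring
      rw [heq2]; exact hdiffk
    have hBC : (p : ℤ_[p]) ^ M ∣ (B - (C : ℤ_[p])) * (F : ℤ_[p]) := by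
      have heq3 : (B - (C : ℤ_[p])) * (F : ℤ_[p]) = B * F - (C : ℤ_[p]) * F := by ring
      rw [heq3, hB', hCK]; exact hprod
    have hBC1 : (p : ℤ_[p]) ∣ B - (C : ℤ_[p]) := by
      have hvM : v + 1 ≤ M := by omega
      have h2 : (p : ℤ_[p]) ^ (v + 1) ∣ (B - (C : ℤ_[p])) * (F : ℤ_[p]) :=
        (pow_dvd_pow _ hvM).trans hBC
      have hFsplit : (F : ℤ_[p]) = (p : ℤ_[p]) ^ v * (F' : ℤ_[p]) := by
        rw [← hFF]; push_cast; ring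
      have h2' : (p : ℤ_[p]) ^ v * (p : ℤ_[p])
          ∣ (p : ℤ_[p]) ^ v * ((B - (C : ℤ_[p])) * (F' : ℤ_[p])) := by
        rw [← pow_succ]
        have heq4 : (p : ℤ_[p]) ^ v * ((B - (C : ℤ_[p])) * (F' : ℤ_[p]))
            = (B - (C : ℤ_[p])) * ((p : ℤ_[p]) ^ v * (F' : ℤ_[p])) := by ring
        rw [heq4, ← hFsplit]
        exact h2
      have hpv : ((p : ℤ_[p]) ^ v) ≠ 0 :=
        pow_ne_zero _ (Nat.cast_ne_zero.mpr hpp.ne_zero)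
      have h5 : (p : ℤ_[p]) ∣ (B - (C : ℤ_[p])) * (F' : ℤ_[p]) :=
        (mul_dvd_mul_iff_left hpv).mp h2'
      rcases (PadicInt.prime_p).dvd_or_dvd h5 with h6 | h6
      · exact h6
      · exact absurd (padic_dvd_natCast.mp h6) hpF'
    have hlucas : (C : ZMod p) = ((∏ i ∈ Finset.range N,
        natMultinomial (kd i) (fun j => q j / p ^ i % p) : ℕ) : ZMod p) := by
      rw [hCdef, natMultinomial_lucas p N K q hN, Nat.cast_prod]
      refine Finset.prod_congr rfl fun i hi => ?_
      rw [hKdef, digit_div_pow_mod hppos kd hkd (show i < M by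
        have := Finset.mem_range.mp hi; omega)]
    have htrans := padic_dvd_sub_of_zmod_eq hlucas
    have hfinal := dvd_add hBC1 htrans
    have heq5 : (B - (C : ℤ_[p])) + ((C : ℤ_[p]) - ((∏ i ∈ Finset.range N,
        natMultinomial (kd i) (fun j => q j / p ^ i % p) : ℕ) : ℤ_[p]))
        = B - ((∏ i ∈ Finset.range N,
        natMultinomial (kd i) (fun j => q j / p ^ i % p) : ℕ) : ℤ_[p]) := by ring
    rwa [heq5] at hfinal
  have hqQ : ∀ (j : Fin r), q j ≤ Q :=
    fun j => Finset.single_le_sum (f := q) (fun _ _ => Nat.zero_le _) (Finset.mem_univ j)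
  have hQbound : ∀ N : ℕ, Q + 1 ≤ N → ∀ j, q j < p ^ N := by
    intro N hle j
    calc q j ≤ Q := hqQ j
      _ < p ^ Q := Nat.lt_pow_self (n := Q) hpp.one_lt
      _ ≤ p ^ N := Nat.pow_le_pow_right hppos (by omega)
  refine ⟨?_, ?_, ?_⟩
  · intro N hN
    have h := main N hN
    rwa [Nat.cast_prod] at h
  · constructor
    · intro hndvd i
      by_contra hcon
      push_neg at hcon
      apply hndvd
      set N : ℕ := max (i + 1) (Q + 1) with hNdef
      have h := main N (hQbound N (le_max_right _ _))
      have hzero : (∏ i' ∈ Finset.range N,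
          natMultinomial (kd i') (fun j => q j / p ^ i' % p)) = 0 := by
        apply Finset.prod_eq_zero (Finset.mem_range.mpr (show i < N by
          have := le_max_left (i + 1) (Q + 1); omega))
        exact natMultinomial_of_lt (by omega)
      rw [hzero, Nat.cast_zero, sub_zero] at h
      exact h
    · intro h hdvd
      have hm := main (Q + 1) (hQbound (Q + 1) le_rfl)
      have hP : (p : ℤ_[p]) ∣ ((∏ i ∈ Finset.range (Q + 1),
          natMultinomial (kd i) (fun j => q j / p ^ i % p) : ℕ) : ℤ_[p]) := by
        have := dvd_sub hdvd hm
        have heq6 : B - (B - ((∏ i ∈ Finset.range (Q + 1),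
            natMultinomial (kd i) (fun j => q j / p ^ i % p) : ℕ) : ℤ_[p]))
            = ((∏ i ∈ Finset.range (Q + 1),
            natMultinomial (kd i) (fun j => q j / p ^ i % p) : ℕ) : ℤ_[p]) := by ring
        rwa [heq6] at this
      rw [padic_dvd_natCast] at hP
      obtain ⟨i, _, hpi⟩ := (Prime.dvd_finset_prod_iff hpp.prime _).mp hP
      exact not_dvd_natMultinomial p hpp (hkd i) (h i) hpi
  · intro h j hqj
    set vj : ℕ := padicValNat p (q j) with hvjdef
    have hdig : q j / p ^ vj % p ≠ 0 := by
      intro h0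
      have h1 : ¬ p ∣ q j / p ^ vj := by
        have h2 := Nat.not_dvd_ordCompl hpp hqj
        rwa [Nat.factorization_def _ hpp] at h2
      exact h1 (Nat.dvd_of_mod_eq_zero h0)
    have hkdv : 1 ≤ kd vj := by
      have h1 : q j / p ^ vj % p ≤ ∑ j', q j' / p ^ vj % p :=
        Finset.single_le_sum (f := fun j' => q j' / p ^ vj % p)
          (fun _ _ => Nat.zero_le _) (Finset.mem_univ j)
      have h2 := h vj
      omega
    by_contra hcon
    push_neg at hcon
    rw [PadicInt.valuation_coe] at hcon
    by_cases hk0 : k = 0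
    · rw [hk0, PadicInt.valuation_zero] at hcon
      have : (0 : ℤ) ≤ (vj : ℤ) := Int.natCast_nonneg vj
      omega
    · have hval : ((vj + 1 : ℕ) : ℤ) ≤ k.valuation := by
        push_cast
        omega
      have hnorm : ‖k‖ ≤ (p : ℝ) ^ (-(vj + 1 : ℕ) : ℤ) :=
        (PadicInt.norm_le_pow_iff_le_valuation k hk0 (vj + 1)).mpr (by exact_mod_cast hval)
      have hdvdk : (p : ℤ_[p]) ^ (vj + 1) ∣ k := by
        have := (PadicInt.norm_le_pow_iff_mem_span_pow k (vj + 1)).mp hnorm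
        rwa [Ideal.mem_span_singleton] at this
      have hKdvd : (p : ℤ_[p]) ^ (vj + 1)
          ∣ ((∑ i ∈ Finset.range (vj + 1), kd i * p ^ i : ℕ) : ℤ_[p]) := by
        have htail := padic_tail_dvd (p := p) kd (vj + 1)
        rw [← hk] at htail
        have heq7 : ((∑ i ∈ Finset.range (vj + 1), kd i * p ^ i : ℕ) : ℤ_[p])
            = k - (k - ((∑ i ∈ Finset.range (vj + 1), kd i * p ^ i : ℕ) : ℤ_[p])) := by ring
        rw [heq7]
        exact dvd_sub hdvdk htail
      rw [padic_pow_dvd_natCast] at hKdvd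
      have hKlt := digit_sum_lt hppos kd hkd (vj + 1)
      have hKpos : 0 < ∑ i ∈ Finset.range (vj + 1), kd i * p ^ i := by
        have h1 : kd vj * p ^ vj ≤ ∑ i ∈ Finset.range (vj + 1), kd i * p ^ i :=
          Finset.single_le_sum (f := fun i => kd i * p ^ i) (fun _ _ => Nat.zero_le _)
            (Finset.mem_range.mpr (Nat.lt_succ_self vj))
        have h2 : 0 < p ^ vj := pow_pos hppos vj
        have h3 : 1 * 1 ≤ kd vj * p ^ vj := Nat.mul_le_mul hkdv h2
        omega
      have := Nat.le_of_dvd hKpos hKdvd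
      omega
end
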